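/- Let G be a finite group of order g, let ρ : G → Matrix (Fin N) (Fin N) ℂ be a representation of G by complex matrices, let q : G → ℝ with q(h) ≥ 0 and ∑_{h∈G} q(h) = 1, and set L = ∑_{h∈G} q(h) • ρ(h) − 1 and Φ* = (1/g) • ∑_{h∈G} ρ(h). Then for all t, s ≥ 0, Matrix.exp(t • L + s • (Φ* − 1)) = e^{−s} • Matrix.exp(t • L) + (1 − e^{−s}) • Φ*. Consequently, for every accessible map Ω_t = exp(t·L), the whole segment joining Ω_t to Φ* is accessible: the set of accessible maps is star-shaped with respect to the center Φ* of the group polytope. -/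

import Mathlib

open NormedSpace

attribute [local instance] Matrix.linftyOpNormedRing Matrix.linftyOpNormedAlgebra

lemma aux_exp_mul_of_mul_eq_zero {N : ℕ} (A P : Matrix (Fin N) (Fin N) ℂ)
    (h : A * P = 0) : exp A * P = P := by
  have : exp A = ∑' n : ℕ, ((n.factorial : ℂ))⁻¹ • A ^ n := by
    rw [exp_eq_tsum (𝕂 := ℂ)]
  erw [this, ← (expSeries_summable' (𝕂 := ℂ) A).tsum_mul_right P]
  rw [tsum_eq_single 0 ?_]
  · simp
  · intro n hn
    obtain ⟨m, rfl⟩ := Nat.exists_eq_succ_of_ne_zero hn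
    rw [smul_mul_assoc, pow_succ, mul_assoc, h, mul_zero, smul_zero]

lemma aux_exp_idem {N : ℕ} (P : Matrix (Fin N) (Fin N) ℂ) (hP : P * P = P) (c : ℂ) :
    exp (c • P) = 1 + (Complex.exp c - 1) • P := by
  have hPn : ∀ n : ℕ, P ^ (n + 1) = P := by
    intro n; induction n with
    | zero => simp
    | succ m ih => rw [pow_succ, ih, hP]
  have hrw : exp (c • P) = ∑' n : ℕ, ((n.factorial : ℂ))⁻¹ • (c • P) ^ n := by
    rw [exp_eq_tsum (𝕂 := ℂ)]
  rw [hrw]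
  have hsum : Summable fun n : ℕ => ((n.factorial : ℂ))⁻¹ • (c • P) ^ n :=
    expSeries_summable' (𝕂 := ℂ) (c • P)
  rw [Summable.tsum_eq_zero_add hsum]
  congr 1
  · simp
  have key : ∀ n : ℕ, (((n + 1).factorial : ℂ))⁻¹ • (c • P) ^ (n + 1)
      = ((((n + 1).factorial : ℂ))⁻¹ * c ^ (n + 1)) • P := by
    intro n
    rw [smul_pow, hPn, smul_smul]
  simp_rw [key]
  have hs2 : Summable fun n : ℕ => (((n + 1).factorial : ℂ))⁻¹ * c ^ (n + 1) := by
    have h0 : Summable fun n : ℕ => ((n.factorial : ℂ))⁻¹ * c ^ n := by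
      simpa [smul_eq_mul] using expSeries_summable' (𝕂 := ℂ) c
    exact h0.comp_injective (add_left_injective 1)
  rw [Summable.tsum_smul_const hs2 P]
  congr 1
  have hc : Complex.exp c = ∑' n : ℕ, ((n.factorial : ℂ))⁻¹ • c ^ n := by
    rw [Complex.exp_eq_exp_ℂ, exp_eq_tsum (𝕂 := ℂ)]
  have hcs : Summable fun n : ℕ => ((n.factorial : ℂ))⁻¹ • c ^ n :=
    expSeries_summable' (𝕂 := ℂ) c
  rw [hc, Summable.tsum_eq_zero_add hcs]
  simp [smul_eq_mul]

/-- Star-shapedness of the set of accessible maps with respect to the center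
`Φ* = (1/g) ∑ ρ h`: for the Lindblad generator `L = ∑ q h • ρ h − 1`,
`exp(t•L + s•(Φ*−1)) = e^{−s} • exp(t•L) + (1 − e^{−s}) • Φ*`, so the whole segment joining the
accessible map `exp(t•L)` to `Φ*` is accessible. -/
theorem accessible_maps_star_shaped
    {G : Type*} [Group G] [Fintype G] {N : ℕ}
    (ρ : G →* Matrix (Fin N) (Fin N) ℂ)
    (q : G → ℝ) (hq : ∀ h : G, 0 ≤ q h) (hqsum : ∑ h : G, q h = 1)
    (t s : ℝ) (ht : 0 ≤ t) (hs : 0 ≤ s) :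
    NormedSpace.exp
        (t • ((∑ h : G, q h • ρ h) - 1) +
          s • ((((Fintype.card G : ℂ))⁻¹ • ∑ h : G, ρ h) - 1)) =
      Real.exp (-s) • NormedSpace.exp (t • ((∑ h : G, q h • ρ h) - 1)) +
        (1 - Real.exp (-s)) • (((Fintype.card G : ℂ))⁻¹ • ∑ h : G, ρ h) := by
  classical
  set M := Matrix (Fin N) (Fin N) ℂ
  set Φ : M := ((Fintype.card G : ℂ))⁻¹ • ∑ h : G, ρ h with hΦdef
  set L : M := (∑ h : G, q h • ρ h) - 1 with hLdef
  have hcard : (Fintype.card G : ℂ) ≠ 0 := Nat.cast_ne_zero.mpr Fintype.card_ne_zero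
  have hreal : ∀ (r : ℝ) (A : M), r • A = (r : ℂ) • A := by
    intro r A; ext i j; simp [Matrix.smul_apply, Complex.real_smul]
  -- group averaging identities
  have hSl : ∀ k : G, ρ k * (∑ h : G, ρ h) = ∑ h : G, ρ h := by
    intro k
    rw [Finset.mul_sum]
    calc ∑ h : G, ρ k * ρ h = ∑ h : G, ρ (k * h) := by simp [map_mul]
      _ = ∑ h : G, ρ h := Equiv.sum_comp (Equiv.mulLeft k) (fun h => ρ h)
  have hSr : ∀ k : G, (∑ h : G, ρ h) * ρ k = ∑ h : G, ρ h := by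
    intro k
    rw [Finset.sum_mul]
    calc ∑ h : G, ρ h * ρ k = ∑ h : G, ρ (h * k) := by simp [map_mul]
      _ = ∑ h : G, ρ h := Equiv.sum_comp (Equiv.mulRight k) (fun h => ρ h)
  have hρΦ : ∀ k : G, ρ k * Φ = Φ := by
    intro k; rw [hΦdef, mul_smul_comm, hSl]
  have hΦρ : ∀ k : G, Φ * ρ k = Φ := by
    intro k; rw [hΦdef, smul_mul_assoc, hSr]
  have hΦΦ : Φ * Φ = Φ := by
    have hSΦ : (∑ h : G, ρ h) * Φ = (Fintype.card G : ℂ) • Φ := by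
      rw [Finset.sum_mul]
      simp_rw [hρΦ]
      rw [Finset.sum_const, Finset.card_univ, ← Nat.cast_smul_eq_nsmul ℂ]
    rw [hΦdef, smul_mul_assoc, ← hΦdef, hSΦ, smul_smul, inv_mul_cancel₀ hcard, one_smul]
  have hLΦ : L * Φ = 0 := by
    rw [hLdef, sub_mul, one_mul, Finset.sum_mul]
    have : ∀ h : G, (q h • ρ h : M) * Φ = q h • Φ := by
      intro h; rw [smul_mul_assoc, hρΦ]
    simp_rw [this]
    rw [← Finset.sum_smul, hqsum, one_smul, sub_self]
  have hΦL : Φ * L = 0 := by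
    rw [hLdef, mul_sub, mul_one, Finset.mul_sum]
    have : ∀ h : G, Φ * (q h • ρ h : M) = q h • Φ := by
      intro h; rw [mul_smul_comm, hΦρ]
    simp_rw [this]
    rw [← Finset.sum_smul, hqsum, one_smul, sub_self]
  have hcomm : Commute L Φ := by
    show L * Φ = Φ * L; rw [hLΦ, hΦL]
  -- split the exponent
  have hsplit : t • L + s • (Φ - 1) = (t • L + (-s : ℝ) • (1 : M)) + s • Φ := by
    rw [smul_sub]; module
  have hc2 : Commute (t • L + (-s : ℝ) • (1 : M)) (s • Φ) :=
    Commute.add_left ((hcomm.smul_left t).smul_right s)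
      (((Commute.one_left Φ).smul_left (-s)).smul_right s)
  have hc3 : Commute (t • L) ((-s : ℝ) • (1 : M)) :=
    (Commute.one_right (t • L)).smul_right (-s)
  rw [hsplit, Matrix.exp_add_of_commute _ _ hc2, Matrix.exp_add_of_commute _ _ hc3]
  -- compute exp of the scalar part
  have hexp1 : NormedSpace.exp ((-s : ℝ) • (1 : M)) = Complex.exp (-(s : ℂ)) • 1 := by
    erw [hreal, show ((-s : ℝ) : ℂ) = -(s : ℂ) by push_cast; ring,
      ← Algebra.algebraMap_eq_smul_one, ← NormedSpace.algebraMap_exp_comm,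
      ← Complex.exp_eq_exp_ℂ, Algebra.algebraMap_eq_smul_one]
  -- compute exp of the idempotent part
  have hexp2 : NormedSpace.exp (s • Φ) = 1 + (Complex.exp (s : ℂ) - 1) • Φ := by
    rw [hreal]; exact aux_exp_idem Φ hΦΦ (s : ℂ)
  -- exp (t•L) absorbs Φ
  have habs : NormedSpace.exp (t • L) * Φ = Φ := by
    apply aux_exp_mul_of_mul_eq_zero
    rw [smul_mul_assoc, hLΦ, smul_zero]
  rw [hexp1, hexp2]
  set E : M := NormedSpace.exp (t • L)
  have hes : Complex.exp (-(s : ℂ)) = (Real.exp (-s) : ℂ) := by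
    push_cast; ring_nf
  rw [mul_smul_comm, mul_one, smul_mul_assoc, mul_add, mul_one, mul_smul_comm, habs,
    smul_add, smul_smul, hes]
  rw [hreal (Real.exp (-s)) E, hreal (1 - Real.exp (-s)) Φ]
  congr 1
  have : (Real.exp (-s) : ℂ) * (Complex.exp (s : ℂ) - 1) = 1 - (Real.exp (-s) : ℂ) := by
    rw [← hes, mul_sub, mul_one, ← Complex.exp_add]
    simp
  rw [this]
  push_cast
  ring_nf
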